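/- Let ζ₊ ∈ ℂ² be a nonzero Majorana spinor. Then for every Majorana spinor ζ₋ ∈ ℂ² there exist unique λ₁, λ₂ ∈ ℝ such that ζ₋ = (1/√2)·( λ₁·σ₂ − λ₂·σ₁ )·ζ₊. (In gamma-matrix language, ζ₋ = (1/√2)·λ^a·γ_{a0}·ζ₊ with γ_{a0} = ½[γ_a, γ₀]; this is the statement that the local Galilean boost gauge freedom can be completely fixed by setting ζ₋ = 0 whenever ζ₊ ≠ 0.) -/

import Mathlib

open Matrix Complex

noncomputable section

/-- Pauli matrix σ₁. -/
def σ1 : Matrix (Fin 2) (Fin 2) ℂ := !![0, 1; 1, 0]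
/-- Pauli matrix σ₂. -/
def σ2 : Matrix (Fin 2) (Fin 2) ℂ := !![0, -I; I, 0]

/-- A spinor ζ ∈ ℂ² is Majorana if conj(ζ) = i σ₁ ζ componentwise. -/
def IsMajorana (ζ : Fin 2 → ℂ) : Prop := star ζ = (I • σ1).mulVec ζ

/-- Let ζ₊ be a nonzero Majorana spinor. Then every Majorana spinor ζ₋ can be written
uniquely as ζ₋ = (1/√2)(λ₁σ₂ − λ₂σ₁)ζ₊ with λ₁, λ₂ ∈ ℝ: the Galilean boost gauge
freedom can be completely fixed by setting ζ₋ = 0 whenever ζ₊ ≠ 0. -/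
theorem boost_gauge_fixing (ζp : Fin 2 → ℂ) (hζp : ζp ≠ 0) (hM : IsMajorana ζp) :
    ∀ ζm : Fin 2 → ℂ, IsMajorana ζm →
      ∃! l : ℝ × ℝ, ζm = ((Real.sqrt 2 : ℂ))⁻¹ •
        (((l.1 : ℂ) • σ2 - (l.2 : ℂ) • σ1).mulVec ζp) := by
  intro ζm hMm
  have hp0 := congrFun hM 0
  have hm0 := congrFun hMm 0
  simp [IsMajorana, σ1, mulVec, Fin.sum_univ_two, Pi.star_apply, Complex.star_def] at hp0 hm0
  have hp1 : ζp 1 = -I * (starRingEnd ℂ) (ζp 0) := by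
    rw [hp0]; ring_nf; rw [Complex.I_sq]; ring
  have hmm1 : ζm 1 = -I * (starRingEnd ℂ) (ζm 0) := by
    rw [hm0]; ring_nf; rw [Complex.I_sq]; ring
  have ha : ζp 0 ≠ 0 := by
    intro h
    apply hζp
    funext i
    fin_cases i
    · exact h
    · simp [hp1, h]
  have hca : (starRingEnd ℂ) (ζp 0) ≠ 0 := by simpa using ha
  have h2pos : (0:ℝ) < Real.sqrt 2 := by positivity
  have hc2 : (Real.sqrt 2 : ℂ) ≠ 0 :=
    Complex.ofReal_ne_zero.mpr (ne_of_gt h2pos)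
  set μ : ℂ := (Real.sqrt 2 : ℂ) * ζm 0 / (starRingEnd ℂ) (ζp 0) with hμdef
  have hm : μ * (starRingEnd ℂ) (ζp 0) = (Real.sqrt 2 : ℂ) * ζm 0 := by
    rw [hμdef]; field_simp
  have hmc : (starRingEnd ℂ) μ * ζp 0 = (Real.sqrt 2 : ℂ) * (starRingEnd ℂ) (ζm 0) := by
    have := congrArg (starRingEnd ℂ) hm
    simpa [_root_.map_mul, Complex.conj_ofReal] using this
  have hre : (μ.re : ℂ) + μ.im * I = μ := Complex.re_add_im μ
  have hre' : (μ.re : ℂ) - μ.im * I = (starRingEnd ℂ) μ := by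
    apply Complex.ext <;> simp
  refine ⟨(-μ.re, μ.im), ?_, ?_⟩
  · funext i
    fin_cases i <;>
      simp only [Fin.isValue, Pi.smul_apply, smul_eq_mul, mulVec, Fin.sum_univ_two,
        σ1, σ2, Matrix.sub_apply, Matrix.smul_apply, Matrix.cons_val', Matrix.cons_val_zero,
        Matrix.cons_val_one, Matrix.head_cons, Matrix.head_fin_const, Matrix.empty_val',
        Matrix.cons_val_fin_one, Matrix.vecHead, Matrix.vecTail, Function.comp_apply,
        Fin.succ_zero_eq_one, hp1, hmm1, dotProduct, Matrix.of_apply] <;>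
      push_cast <;>
      field_simp
    · linear_combination -hm - (starRingEnd ℂ) (ζp 0) * hre + ((starRingEnd ℂ) (ζp 0) * (μ.re:ℂ)) * Complex.I_sq
    · linear_combination I * hmc + (I * ζp 0) * hre' + ((Real.sqrt 2 : ℂ)) * hmm1 + (ζp 0 * (μ.im:ℂ)) * Complex.I_sq
  · rintro ⟨l1, l2⟩ hl
    have h0 := congrFun hl 0
    simp only [Fin.isValue, Pi.smul_apply, smul_eq_mul, mulVec, Fin.sum_univ_two,
      σ1, σ2, Matrix.sub_apply, Matrix.smul_apply, Matrix.cons_val', Matrix.cons_val_zero,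
      Matrix.cons_val_one, Matrix.head_cons, Matrix.head_fin_const, Matrix.empty_val',
      Matrix.cons_val_fin_one, Matrix.vecHead, Matrix.vecTail, Function.comp_apply,
      Fin.succ_zero_eq_one, hp1, dotProduct, Matrix.of_apply] at h0
    have key : μ = -(l1:ℂ) + (l2:ℂ) * I := by
      apply mul_right_cancel₀ hca
      rw [hm, h0]
      field_simp
      linear_combination ((l1:ℂ) * (starRingEnd ℂ) (ζp 0)) * Complex.I_sq
    have k1 : l1 = -μ.re := by
      have := congrArg Complex.re key
      simp at this
      linarith
    have k2 : l2 = μ.im := by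
      have := congrArg Complex.im key
      simp at this
      linarith
    simp [k1, k2]
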